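/- Let n, t ∈ ℕ with 1 ≤ t < n ≤ 2t. Then the Strong Validity property val_strong (with V_I = V_O = {0,1}) does not satisfy the containment condition: there exists c ∈ I_n such that ⋂_{c' ∈ Cnt(c)} val_strong(c') = ∅, and consequently there is no function Γ : I → {0,1} with Γ(c) ∈ ⋂_{c' ∈ Cnt(c)} val_strong(c') for every c ∈ I. -/

import Mathlib

/-- An input configuration: an assignment of proposals to at least `n - t`
processes (`none` marks processes outside the domain `π(c)`). -/
def IsInputConf (n t : ℕ) {Vi : Type} (c : Fin n → Option Vi) : Prop :=
  n - t ≤ {i | c i ≠ none}.ncard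

/-- The containment relation `c ⊒ c'` between input configurations. -/
def Contains {n : ℕ} {Vi : Type} (c c' : Fin n → Option Vi) : Prop :=
  ∀ i, c' i ≠ none → c i = c' i

/-- Every process of `π(c)` has proposal `b` under `c`. -/
def Unanimous {n : ℕ} (c : Fin n → Option Bool) (b : Bool) : Prop :=
  ∀ i, ∀ b', c i = some b' → b' = b

/-- Strong Validity (for `V_I = V_O = {0,1}`): `val_strong(c) = {b}` if every
process of `π(c)` has proposal `b` under `c`, and `val_strong(c) = {0,1}`
otherwise. -/
def valStrong {n : ℕ} (c : Fin n → Option Bool) : Set Bool :=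
  {b | Unanimous c b ∨ ∀ b₀, ¬ Unanimous c b₀}

lemma aux_ncard_lt (n k : ℕ) (hk : k ≤ n) :
    {i : Fin n | (i : ℕ) < k}.ncard = k := by
  have h1 : {i : Fin n | (i : ℕ) < k} = Set.range (Fin.castLE hk) := by
    ext i
    simp only [Set.mem_setOf_eq, Set.mem_range]
    constructor
    · intro h; exact ⟨⟨i, h⟩, by ext; simp⟩
    · rintro ⟨j, rfl⟩; exact j.2
  rw [h1, ← Set.image_univ, Set.ncard_image_of_injective _ (Fin.castLE_injective hk),
    Set.ncard_univ]
  simp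

/-- For `1 ≤ t < n ≤ 2t`, Strong Validity does not satisfy
the containment condition: some `c ∈ I_n` has
`⋂_{c' ∈ Cnt(c)} val_strong(c') = ∅`, and consequently no function
`Γ : I → {0,1}` with `Γ(c) ∈ ⋂_{c' ∈ Cnt(c)} val_strong(c')` for all `c ∈ I`
exists. -/
theorem strong_validity_fails_containment
    (n t : ℕ) (ht1 : 1 ≤ t) (htn : t < n) (hn2t : n ≤ 2 * t) :
    (∃ c : Fin n → Option Bool, IsInputConf n t c ∧ (∀ i, c i ≠ none) ∧
      (⋂ c' ∈ {c' : Fin n → Option Bool | IsInputConf n t c' ∧ Contains c c'},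
        valStrong c') = ∅) ∧
    ¬ ∃ Γ : (Fin n → Option Bool) → Bool, ∀ c, IsInputConf n t c →
        ∀ c', IsInputConf n t c' → Contains c c' → Γ c ∈ valStrong c' := by
  set k := n - t with hk
  have hk1 : 1 ≤ k := by omega
  have hkn : k ≤ n := by omega
  have hkt : k ≤ t := by omega
  set c : Fin n → Option Bool := fun i => some (decide (k ≤ (i : ℕ))) with hc
  have hcfull : ∀ i, c i ≠ none := fun i => by simp [hc]
  have hcconf : IsInputConf n t c := by
    unfold IsInputConf
    have h : {i : Fin n | c i ≠ none} = Set.univ := by ext i; simp [hcfull i]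
    rw [h, Set.ncard_univ]
    simp only [Nat.card_eq_fintype_card, Fintype.card_fin]
    omega
  set c0 : Fin n → Option Bool := fun i => if (i : ℕ) < k then some false else none with hc0
  have hc0conf : IsInputConf n t c0 := by
    unfold IsInputConf
    have h : {i : Fin n | c0 i ≠ none} = {i : Fin n | (i : ℕ) < k} := by
      ext i; simp only [hc0, Set.mem_setOf_eq]; split <;> simp_all
    rw [h, aux_ncard_lt n k hkn]
  have hcont0 : Contains c c0 := by
    intro i hi
    simp only [hc0, hc] at hi ⊢
    split at hi
    · next h => split <;> simp_all <;> omega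
    · exact absurd rfl hi
  set c1 : Fin n → Option Bool := fun i => if k ≤ (i : ℕ) then some true else none with hc1
  have hc1conf : IsInputConf n t c1 := by
    unfold IsInputConf
    have he : {i : Fin n | c1 i ≠ none} = {i : Fin n | (i : ℕ) < k}ᶜ := by
      ext i
      simp only [hc1, Set.mem_setOf_eq, Set.mem_compl_iff]
      split <;> simp_all <;> omega
    have hcompl := Set.ncard_add_ncard_compl {i : Fin n | (i : ℕ) < k}
    rw [aux_ncard_lt n k hkn] at hcompl
    simp only [Nat.card_eq_fintype_card, Fintype.card_fin] at hcompl
    rw [he]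
    omega
  have hcont1 : Contains c c1 := by
    intro i hi
    simp only [hc1, hc] at hi ⊢
    split at hi
    · next h => split <;> simp_all
    · exact absurd rfl hi
  -- witness indices
  have hi0 : (0 : ℕ) < n := by omega
  set i0 : Fin n := ⟨0, hi0⟩ with hi0d
  set i1 : Fin n := ⟨n - 1, by omega⟩ with hi1d
  have hc0i0 : c0 i0 = some false := by simp [hc0, hi0d]; omega
  have hc1i1 : c1 i1 = some true := by simp [hc1, hi1d]; omega
  -- valStrong of c0 forces false
  have hval0 : ∀ b, b ∈ valStrong c0 → b = false := by
    intro b hb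
    have hu0 : Unanimous c0 false := by
      intro i b' h
      simp only [hc0] at h
      split at h <;> simp_all
    rcases hb with h | h
    · exact (h i0 false hc0i0).symm
    · exact absurd hu0 (h false)
  have hval1 : ∀ b, b ∈ valStrong c1 → b = true := by
    intro b hb
    have hu1 : Unanimous c1 true := by
      intro i b' h
      simp only [hc1] at h
      split at h <;> simp_all
    rcases hb with h | h
    · exact (h i1 true hc1i1).symm
    · exact absurd hu1 (h true)
  constructor
  · refine ⟨c, hcconf, hcfull, ?_⟩
    ext b
    simp only [Set.mem_iInter, Set.mem_empty_iff_false, iff_false, not_forall]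
    by_cases hbf : b = false
    · refine ⟨c1, ?_⟩
      simp only [Set.mem_setOf_eq, not_forall]
      exact ⟨⟨hc1conf, hcont1⟩, fun h => by have := hval1 b h; rw [hbf] at this; exact Bool.false_ne_true this⟩
    · refine ⟨c0, ?_⟩
      simp only [Set.mem_setOf_eq, not_forall]
      exact ⟨⟨hc0conf, hcont0⟩, fun h => by have := hval0 b h; exact hbf this⟩
  · rintro ⟨Γ, hΓ⟩
    have h0 := hval0 (Γ c) (hΓ c hcconf c0 hc0conf hcont0)
    have h1 := hval1 (Γ c) (hΓ c hcconf c1 hc1conf hcont1)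
    rw [h0] at h1; exact Bool.false_ne_true h1
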